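/- Let n ≥ 1 and consider the Demazure operators ∂_i on P_n = ℤ[X_1,…,X_n]. Let w0 = (s_1 s_2 ⋯ s_{n−1})(s_1 s_2 ⋯ s_{n−2}) ⋯ (s_1 s_2) s_1 be the reduced expression of the longest element of S_n, and let ∂_{w0} be the corresponding composite of Demazure operators. Then ∂_{w0}(X_2 X_3² ⋯ X_n^{n−1}) = 1, where X_2 X_3² ⋯ X_n^{n−1} = ∏_{i=2}^{n} X_i^{i−1} is the staircase monomial. -/

import Mathlib

open MvPolynomial

namespace DemAux

variable {R : Type*} [CommRing R] {S : Type*} [CommRing S]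

def hp {R : Type*} [CommRing R] : ℕ → List R → R
  | 0, _ => 1
  | _+1, [] => 0
  | k+1, a :: l => a * hp k (a :: l) + hp (k+1) l

@[simp] lemma hp_zero (l : List R) : hp 0 l = 1 := by unfold hp; rfl
@[simp] lemma hp_nil (k : ℕ) : hp (k+1) ([] : List R) = 0 := by unfold hp; rfl
lemma hp_cons (k : ℕ) (a : R) (l : List R) :
    hp (k+1) (a :: l) = a * hp k (a :: l) + hp (k+1) l := by
  conv_lhs => unfold hp

lemma hp_single (k : ℕ) (a : R) : hp k [a] = a ^ k := by
  induction k with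
  | zero => simp
  | succ k ih => rw [hp_cons, ih, hp_nil, pow_succ]; ring

lemma hp_sub (a b : R) (l : List R) :
    ∀ k : ℕ, (a - b) * hp k (a :: b :: l) = hp (k+1) (a :: l) - hp (k+1) (b :: l)
  | 0 => by
      rw [hp_zero, hp_cons 0 a l, hp_cons 0 b l, hp_zero, hp_zero]; ring
  | (k+1) => by
      have ih := hp_sub a b l k
      rw [hp_cons k a (b :: l), hp_cons (k+1) a l, hp_cons (k+1) b l]
      linear_combination a * ih

lemma hp_hom (f : R →+* S) : ∀ (k : ℕ) (l : List R), f (hp k l) = hp k (l.map f)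
  | 0, _ => by simp
  | (k+1), [] => by simp
  | (k+1), a :: l => by
      rw [hp_cons, map_add, map_mul, hp_hom f k (a :: l), hp_hom f (k+1) l,
        List.map_cons, hp_cons]

/-! ### Polynomial gadgets in `n+1` variables -/

variable (n : ℕ)

/-- The variable `X_j` (indices taken mod `n+1` to avoid dependent proofs). -/
noncomputable def xv (j : ℕ) : MvPolynomial (Fin (n+1)) ℤ :=
  X ⟨j % (n+1), Nat.mod_lt _ n.succ_pos⟩

lemma xv_eq {j : ℕ} (h : j ≤ n) : xv n j = X (⟨j, by omega⟩ : Fin (n+1)) := by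
  unfold xv; congr 1; exact Fin.ext (Nat.mod_eq_of_lt (by omega))

/-- Partial staircase monomial `∏_{i ≥ m} X_i^i`. -/
noncomputable def Tm (m : ℕ) : MvPolynomial (Fin (n+1)) ℤ :=
  ∏ i : Fin (n+1), X i ^ (if m ≤ (i : ℕ) then (i : ℕ) else 0)

lemma Tm_zero : Tm n 0 = ∏ i : Fin (n+1), X i ^ (i : ℕ) := by
  unfold Tm; simp

lemma Tm_top : Tm n (n+1) = 1 := by
  unfold Tm
  rw [Finset.prod_eq_one]
  intro i _
  rw [if_neg (by omega), pow_zero]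

lemma Tm_one : Tm n 0 = Tm n 1 := by
  unfold Tm
  apply Finset.prod_congr rfl
  intro i _
  congr 1
  rcases Nat.eq_zero_or_pos (i : ℕ) with h | h
  · simp [h]
  · rw [if_pos (by omega), if_pos (by omega)]

lemma Tm_split {m : ℕ} (hm : m ≤ n) :
    Tm n m = xv n m ^ m * Tm n (m+1) := by
  rw [xv_eq n hm]
  unfold Tm
  set a : Fin (n+1) := ⟨m, by omega⟩ with ha
  have key : ∀ i : Fin (n+1),
      (if m ≤ (i : ℕ) then (i : ℕ) else 0) =
        (if i = a then m else 0) + (if m+1 ≤ (i : ℕ) then (i : ℕ) else 0) := by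
    intro i
    rcases eq_or_ne i a with rfl | hne
    · simp [ha]
    · have : (i : ℕ) ≠ m := fun h => hne (Fin.ext h)
      rcases le_or_gt m (i : ℕ) with h | h
      · rw [if_pos h, if_neg hne, if_pos (by omega), Nat.zero_add]
      · rw [if_neg (by omega), if_neg hne, if_neg (by omega)]
  calc (∏ i : Fin (n+1), X i ^ (if m ≤ (i:ℕ) then (i:ℕ) else 0))
      = ∏ i : Fin (n+1), (X i ^ (if i = a then m else 0) *
          X i ^ (if m+1 ≤ (i:ℕ) then (i:ℕ) else 0)) := by
        apply Finset.prod_congr rfl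
        intro i _
        rw [← pow_add, key i]
    _ = (∏ i : Fin (n+1), X i ^ (if i = a then m else 0)) *
          ∏ i : Fin (n+1), X i ^ (if m+1 ≤ (i:ℕ) then (i:ℕ) else 0) :=
        Finset.prod_mul_distrib
    _ = X a ^ m * Tm n (m+1) := by
        congr 1
        rw [Finset.prod_eq_single a (fun i _ hne => by rw [if_neg hne, pow_zero])
          (by simp)]
        rw [if_pos rfl]

lemma Tm_swap {m : ℕ} (u v : Fin (n+1)) (hu : (u : ℕ) < m) (hv : (v : ℕ) < m) :
    rename (Equiv.swap u v) (Tm n m) = Tm n m := by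
  unfold Tm
  rw [map_prod]
  simp only [map_pow, rename_X]
  have key : ∀ i : Fin (n+1),
      (X (Equiv.swap u v i) : MvPolynomial (Fin (n+1)) ℤ) ^ (if m ≤ (i:ℕ) then (i:ℕ) else 0) =
        X (Equiv.swap u v i) ^ (if m ≤ ((Equiv.swap u v i : Fin (n+1)) : ℕ)
          then ((Equiv.swap u v i : Fin (n+1)) : ℕ) else 0) := by
    intro i
    rcases eq_or_ne i u with rfl | hiu
    · rw [Equiv.swap_apply_left, if_neg (by omega), if_neg (by omega)]
    rcases eq_or_ne i v with rfl | hiv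
    · rw [Equiv.swap_apply_right, if_neg (by omega), if_neg (by omega)]
    · rw [Equiv.swap_apply_of_ne_of_ne hiu hiv]
  rw [Finset.prod_congr rfl (fun i _ => key i)]
  exact Equiv.prod_comp (Equiv.swap u v)
    (fun i => X i ^ (if m ≤ (i:ℕ) then (i:ℕ) else 0))

/-- The list of variables `[X_j, …, X_{m+1}]`. -/
noncomputable def vlist (j m : ℕ) : List (MvPolynomial (Fin (n+1)) ℤ) :=
  (List.range (m+2-j)).map fun t => xv n (j+t)

lemma vlist_cons {j m : ℕ} (h : j ≤ m+1) :
    vlist n j m = xv n j :: vlist n (j+1) m := by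
  unfold vlist
  have h2 : m+2-j = (m+2-(j+1))+1 := by omega
  rw [h2, List.range_succ_eq_map, List.map_cons, List.map_map]
  congr 1
  apply List.map_congr_left
  intro t _
  simp only [Function.comp_apply]
  congr 1
  omega

lemma vlist_last (m : ℕ) : vlist n (m+1) m = [xv n (m+1)] := by
  unfold vlist
  have : m+2-(m+1) = 1 := by omega
  rw [this, List.range_succ, List.range_zero, List.nil_append, List.map_cons, List.map_nil]

lemma vlist_map_swap {j m : ℕ} (hm : m+1 ≤ n) (u v : Fin (n+1))
    (hu : (u : ℕ) < j) (hv : (v : ℕ) < j) :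
    (vlist n j m).map (rename (Equiv.swap u v)) = vlist n j m := by
  unfold vlist
  rw [List.map_map]
  apply List.map_congr_left
  intro t ht
  rw [List.mem_range] at ht
  have hjt : j + t ≤ n := by omega
  simp only [Function.comp_apply]
  rw [xv_eq n hjt, rename_X, Equiv.swap_apply_of_ne_of_ne]
  · exact fun h => by have := congrArg Fin.val h; simp at this; omega
  · exact fun h => by have := congrArg Fin.val h; simp at this; omega


lemma hp_rename {σ' τ : Type*} (f : σ' → τ) (k : ℕ) (l : List (MvPolynomial σ' ℤ)) :
    rename f (hp k l) = hp k (l.map (rename f)) := by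
  have := hp_hom (rename (R := ℤ) f).toRingHom k l
  simpa using this

/-! ### The Demazure operators -/

variable (D : Fin n → MvPolynomial (Fin (n+1)) ℤ →ₗ[ℤ] MvPolynomial (Fin (n+1)) ℤ)

/-- Extension of `D` to natural number indices. -/
noncomputable def Dn (j : ℕ) (P : MvPolynomial (Fin (n+1)) ℤ) :
    MvPolynomial (Fin (n+1)) ℤ :=
  if h : j < n then D ⟨j, h⟩ P else P

variable (hD : ∀ (i : Fin n) (P : MvPolynomial (Fin (n + 1)) ℤ),
      (X i.succ - X i.castSucc) * D i P =
        P - rename (Equiv.swap i.castSucc i.succ) P)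

include hD in
lemma D_eq (i : Fin n) (P Q : MvPolynomial (Fin (n+1)) ℤ)
    (h : (X i.succ - X i.castSucc) * Q = P - rename (Equiv.swap i.castSucc i.succ) P) :
    D i P = Q := by
  have hne : (X i.succ - X i.castSucc : MvPolynomial (Fin (n+1)) ℤ) ≠ 0 := by
    rw [sub_ne_zero]
    intro he
    exact absurd (MvPolynomial.X_injective he) (Fin.castSucc_lt_succ (i := i)).ne'
  exact mul_left_cancel₀ hne ((hD i P).trans h.symm)

include hD in
lemma block_lemma {m : ℕ} (hm : m < n) :
    ∀ (d j : ℕ), j + d = m + 1 →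
      List.foldr (fun t P => Dn n D t P) (Tm n (m+1))
        ((List.range d).map (fun t => j + t)) = hp j (vlist n j m) * Tm n (m+2) := by
  intro d
  induction d with
  | zero =>
    intro j hj
    obtain rfl : j = m+1 := by omega
    rw [List.range_zero, List.map_nil, List.foldr_nil, vlist_last, hp_single]
    exact Tm_split n (by omega)
  | succ d ih =>
    intro j hj
    have hjm : j ≤ m := by omega
    have hjn : j < n := by omega
    rw [List.range_succ_eq_map, List.map_cons, List.foldr_cons, List.map_map]
    have hmap : ((List.range d).map ((fun t => j + t) ∘ Nat.succ)) =
        (List.range d).map (fun t => (j+1) + t) := by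
      apply List.map_congr_left; intro t _; simp only [Function.comp_apply]; omega
    rw [hmap, ih (j+1) (by omega)]
    show Dn n D j _ = _
    unfold Dn
    rw [dif_pos hjn]
    apply D_eq n D hD ⟨j, hjn⟩
    have hcs : (⟨j, hjn⟩ : Fin n).castSucc = (⟨j, by omega⟩ : Fin (n+1)) := rfl
    have hvc : (((⟨j, hjn⟩ : Fin n).castSucc : Fin (n+1)) : ℕ) = j := rfl
    have hvs : (((⟨j, hjn⟩ : Fin n).succ : Fin (n+1)) : ℕ) = j+1 := rfl
    have hs : (⟨j, hjn⟩ : Fin n).succ = (⟨j+1, by omega⟩ : Fin (n+1)) := rfl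
    have hXs : X ((⟨j, hjn⟩ : Fin n).succ) = xv n (j+1) := by
      rw [hs, ← xv_eq n (by omega)]
    have hXc : X ((⟨j, hjn⟩ : Fin n).castSucc) = xv n j := by
      rw [hcs, ← xv_eq n (by omega)]
    set σ := Equiv.swap (⟨j, hjn⟩ : Fin n).castSucc (⟨j, hjn⟩ : Fin n).succ with hσ
    have hren : rename σ (hp (j+1) (vlist n (j+1) m) * Tm n (m+2)) =
        hp (j+1) (xv n j :: vlist n (j+2) m) * Tm n (m+2) := by
      rw [map_mul]
      congr 1
      · rw [hp_rename, vlist_cons n (by omega : j+1 ≤ m+1), List.map_cons,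
          vlist_map_swap n (by omega : m+1 ≤ n) _ _ (by rw [hvc]; omega)
            (by rw [hvs]; omega)]
        congr 1
        rw [← hXs, rename_X, hσ, Equiv.swap_apply_right, hXc]
      · exact Tm_swap n _ _ (by rw [hvc]; omega) (by rw [hvs]; omega)
    rw [hren, vlist_cons n (by omega : j ≤ m+1), vlist_cons n (by omega : j+1 ≤ m+1),
      hXs, hXc]
    linear_combination (-(Tm n (m+2))) * hp_sub (xv n j) (xv n (j+1)) (vlist n (j+2) m) j

/-- The word over `ℕ`. -/
def wordN : ℕ → List ℕ
  | 0 => []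
  | m+1 => List.range (m+1) ++ wordN m

include hD in
lemma outer_lemma : ∀ m : ℕ, m ≤ n →
    List.foldr (fun t P => Dn n D t P) (Tm n 0) (wordN m) = Tm n (m+1) := by
  intro m
  induction m with
  | zero => intro _; rw [wordN, List.foldr_nil, Tm_one]
  | succ m ih =>
    intro hm
    rw [wordN, List.foldr_append, ih (by omega)]
    have hb : List.range (m+1) = (List.range (m+1)).map (fun t => 0 + t) := by
      simp
    rw [hb, block_lemma n D hD (by omega : m < n) (m+1) 0 (by omega), hp_zero, one_mul]


/-! ### Words -/

lemma map_filter_eq {α β : Type*} (f : α → β) (q : α → Bool) (p : β → Bool)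
    (h : ∀ x, q x = p (f x)) : ∀ l : List α, (l.filter q).map f = (l.map f).filter p
  | [] => rfl
  | a :: l => by
      simp only [List.filter_cons, List.map_cons, ← h a]
      cases hq : q a <;> simp [hq, map_filter_eq f q p h l]

lemma filter_range : ∀ (N v : ℕ), v < N →
    (List.range N).filter (fun x => decide (x ≤ v)) = List.range (v+1)
  | 0, v, h => by omega
  | N+1, v, h => by
      rw [List.range_succ, List.filter_append]
      rcases Nat.lt_or_ge v N with hv | hv
      · rw [filter_range N v hv]
        simp [show ¬ N ≤ v from by omega]
      · obtain rfl : v = N := by omega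
        rw [List.filter_eq_self.mpr
          (fun a ha => decide_eq_true (by rw [List.mem_range] at ha; omega)),
          List.range_succ]
        simp

lemma revRange_flatMap : ∀ M : ℕ,
    (List.range M).reverse.flatMap (fun v => List.range (v+1)) = wordN M
  | 0 => rfl
  | M+1 => by
      rw [List.range_succ, List.reverse_append, List.reverse_singleton,
        List.singleton_append, List.flatMap_cons, revRange_flatMap M, wordN]

end DemAux

/-- The word `(s_1 s_2 ⋯ s_n)(s_1 s_2 ⋯ s_{n-1}) ⋯ (s_1 s_2) s_1` (in 0-indexed form:
the concatenation of the blocks `[0, …, m]` for `m = n-1, n-2, …, 0`),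
a reduced expression of the longest element of `S_{n+1}`. -/
def longestWord (n : ℕ) : List (Fin n) :=
  (List.finRange n).reverse.flatMap fun m => (List.finRange n).filter (· ≤ m)

open DemAux in
/-- Applying the composite Demazure operator `∂_{w0}` corresponding to the reduced
expression `(s_1 ⋯ s_n)(s_1 ⋯ s_{n-1}) ⋯ s_1` of the longest element of `S_{n+1}`
to the staircase monomial `X_2 X_3² ⋯ X_{n+1}^n` yields `1`. -/
theorem demazure_longest_on_staircase (n : ℕ)
    (D : Fin n → MvPolynomial (Fin (n + 1)) ℤ →ₗ[ℤ] MvPolynomial (Fin (n + 1)) ℤ)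
    (hD : ∀ (i : Fin n) (P : MvPolynomial (Fin (n + 1)) ℤ),
      (X i.succ - X i.castSucc) * D i P =
        P - rename (Equiv.swap i.castSucc i.succ) P) :
    (longestWord n).foldr (fun i P => D i P)
      (∏ i : Fin (n + 1), X i ^ (i : ℕ)) = 1 := by
  have hblock : ∀ m : Fin n,
      ((List.finRange n).filter (· ≤ m)).map Fin.val = List.range ((m : ℕ)+1) := by
    intro m
    rw [map_filter_eq Fin.val _ (fun v => decide (v ≤ (m : ℕ)))
      (fun x => decide_eq_decide.mpr Fin.le_def) _, (List.ext_getElem (by simp) (fun _ _ _ => by simp) : List.map Fin.val (List.finRange n) = List.range n)]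
    exact filter_range n (m : ℕ) m.isLt
  have hword : (longestWord n).map Fin.val = wordN n := by
    unfold longestWord
    rw [List.map_flatMap]
    simp only [hblock]
    rw [← List.flatMap_map Fin.val (fun v => List.range (v+1)) ((List.finRange n).reverse),
      List.map_reverse, (List.ext_getElem (by simp) (fun _ _ _ => by simp) : List.map Fin.val (List.finRange n) = List.range n)]
    exact revRange_flatMap n
  have key := outer_lemma n D hD n le_rfl
  rw [← hword, List.foldr_map, Tm_zero, Tm_top] at key
  have hfun : (fun (x : Fin n) (y : MvPolynomial (Fin (n+1)) ℤ) => Dn n D (x : ℕ) y)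
      = fun i P => D i P := by
    funext x y
    unfold Dn
    rw [dif_pos x.isLt]
  rw [← hfun]
  exact key
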